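/- Let C be a symmetric monoidal category which is preadditive and monoidal preadditive (the tensor product of morphisms is additive in each variable, so tensoring with a zero morphism gives a zero morphism), let M be an object of C admitting a dual object Mᘁ, and let f : M ⟶ N be a morphism. Let f̂ : 𝟙 ⟶ Mᘁ ⊗ N denote the mate of f, i.e. the morphism corresponding to f under the duality bijection Hom(M, N) ≅ Hom(𝟙, Mᘁ ⊗ N). Then there exists n ≥ 1 with f^{⊗n} = 0 if and only if there exists n ≥ 1 with f̂^{⊗n} = 0. -/

import Mathlib

open CategoryTheory MonoidalCategory

/-- The `n`-fold tensor power of an object: `M^{⊗0} = 𝟙_C`, `M^{⊗(n+1)} = M^{⊗n} ⊗ M`. -/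
def tensorPowObj {C : Type*} [Category C] [MonoidalCategory C] (M : C) : ℕ → C
  | 0 => 𝟙_ C
  | n + 1 => tensorPowObj M n ⊗ M

/-- The `n`-fold tensor power `f^{⊗n} : M^{⊗n} ⟶ N^{⊗n}` of a morphism `f : M ⟶ N`. -/
def tensorPowHom {C : Type*} [Category C] [MonoidalCategory C] {M N : C} (f : M ⟶ N) :
    ∀ n : ℕ, tensorPowObj M n ⟶ tensorPowObj N n
  | 0 => 𝟙 (𝟙_ C)
  | n + 1 => tensorPowHom f n ⊗ₘ f

section Aux

variable {C : Type*} [Category C] [MonoidalCategory C]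

lemma tensorPowHom_comp {M N P : C} (f : M ⟶ N) (g : N ⟶ P) (n : ℕ) :
    tensorPowHom (f ≫ g) n = tensorPowHom f n ≫ tensorPowHom g n := by
  induction n with
  | zero => exact (Category.comp_id _).symm
  | succ n ih => simp [tensorPowHom, ih, MonoidalCategory.tensorHom_comp_tensorHom]; exact (MonoidalCategory.tensorHom_comp_tensorHom _ _ _ _).symm

variable [BraidedCategory C]

/-- The shuffle map `(U ⊗ X)^{⊗n} ⟶ U^{⊗n} ⊗ X^{⊗n}`. -/
def shuffleHom (U X : C) : ∀ n : ℕ, tensorPowObj (U ⊗ X) n ⟶ tensorPowObj U n ⊗ tensorPowObj X n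
  | 0 => (λ_ (𝟙_ C)).inv
  | n + 1 => shuffleHom U X n ▷ (U ⊗ X) ≫ tensorμ _ _ U X

/-- The inverse shuffle map. -/
def shuffleInv (U X : C) : ∀ n : ℕ, tensorPowObj U n ⊗ tensorPowObj X n ⟶ tensorPowObj (U ⊗ X) n
  | 0 => (λ_ (𝟙_ C)).hom
  | n + 1 => tensorδ _ _ U X ≫ shuffleInv U X n ▷ (U ⊗ X)

lemma shuffleHom_shuffleInv (U X : C) (n : ℕ) :
    shuffleHom U X n ≫ shuffleInv U X n = 𝟙 _ := by
  induction n with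
  | zero => simp [shuffleHom, shuffleInv, tensorPowObj]
  | succ n ih =>
      simp only [shuffleHom, shuffleInv, Category.assoc, tensorμ_tensorδ_assoc]
      show (shuffleHom U X n ▷ (U ⊗ X) ≫ tensorμ _ _ U X) ≫ tensorδ _ _ U X ≫ shuffleInv U X n ▷ (U ⊗ X) = 𝟙 (tensorPowObj (U ⊗ X) n ⊗ (U ⊗ X))
      simp only [Category.assoc, tensorμ_tensorδ_assoc]
      rw [← MonoidalCategory.comp_whiskerRight, ih]
      simp [tensorPowObj]

lemma shuffle_natural {U U' X X' : C} (p : U ⟶ U') (q : X ⟶ X') (n : ℕ) :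
    tensorPowHom (p ⊗ₘ q) n ≫ shuffleHom U' X' n =
      shuffleHom U X n ≫ (tensorPowHom p n ⊗ₘ tensorPowHom q n) := by
  induction n with
  | zero =>
      show 𝟙 (𝟙_ C) ≫ (λ_ (𝟙_ C)).inv = (λ_ (𝟙_ C)).inv ≫ (𝟙 (𝟙_ C) ⊗ₘ 𝟙 (𝟙_ C))
      rw [MonoidalCategory.id_tensorHom_id, Category.id_comp, Category.comp_id]
  | succ n ih =>
      show (tensorPowHom (p ⊗ₘ q) n ⊗ₘ (p ⊗ₘ q)) ≫
            (shuffleHom U' X' n ▷ (U' ⊗ X') ≫ tensorμ _ _ U' X') =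
          (shuffleHom U X n ▷ (U ⊗ X) ≫ tensorμ _ _ U X) ≫
            ((tensorPowHom p n ⊗ₘ p) ⊗ₘ (tensorPowHom q n ⊗ₘ q))
      calc (tensorPowHom (p ⊗ₘ q) n ⊗ₘ (p ⊗ₘ q)) ≫
            (shuffleHom U' X' n ▷ (U' ⊗ X') ≫ tensorμ _ _ U' X')
          = ((tensorPowHom (p ⊗ₘ q) n ≫ shuffleHom U' X' n) ⊗ₘ ((p ⊗ₘ q) ≫ 𝟙 (U' ⊗ X'))) ≫
              tensorμ _ _ U' X' := by
            rw [← tensorHom_id, MonoidalCategory.tensorHom_comp_tensorHom_assoc]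
        _ = ((shuffleHom U X n ≫ (tensorPowHom p n ⊗ₘ tensorPowHom q n)) ⊗ₘ
              (𝟙 (U ⊗ X) ≫ (p ⊗ₘ q))) ≫ tensorμ _ _ U' X' := by
            rw [ih, Category.comp_id, Category.id_comp]
        _ = shuffleHom U X n ▷ (U ⊗ X) ≫
              ((tensorPowHom p n ⊗ₘ tensorPowHom q n) ⊗ₘ (p ⊗ₘ q)) ≫ tensorμ _ _ U' X' := by
            rw [← MonoidalCategory.tensorHom_comp_tensorHom_assoc, tensorHom_id]
        _ = _ := by rw [tensorμ_natural, Category.assoc]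

variable [Preadditive C] [MonoidalPreadditive C]

lemma tensorPowHom_tensor_zero {U U' X X' : C} (p : U ⟶ U') (q : X ⟶ X') (n : ℕ)
    (hq : tensorPowHom q n = 0) : tensorPowHom (p ⊗ₘ q) n = 0 := by
  have h := shuffle_natural p q n
  have : tensorPowHom (p ⊗ₘ q) n
      = shuffleHom U X n ≫ (tensorPowHom p n ⊗ₘ tensorPowHom q n) ≫ shuffleInv U' X' n := by
    rw [← Category.assoc, ← h, Category.assoc, shuffleHom_shuffleInv, Category.comp_id]
  rw [this, hq]
  simp [MonoidalPreadditive.tensor_zero]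

lemma tensorPowHom_whiskerLeft_zero {X X' : C} (U : C) (q : X ⟶ X') (n : ℕ)
    (hq : tensorPowHom q n = 0) : tensorPowHom (U ◁ q) n = 0 := by
  rw [← MonoidalCategory.id_tensorHom]
  exact tensorPowHom_tensor_zero _ _ _ hq

end Aux

/-- Let `C` be a symmetric monoidal category which is preadditive and monoidal preadditive,
let `M` be an object admitting a dual `ᘁM` (with coevaluation `η : 𝟙_C ⟶ ᘁM ⊗ M`),
and let `f : M ⟶ N`.  Write `f̂ := η ≫ (ᘁM ◁ f) : 𝟙_C ⟶ ᘁM ⊗ N` for the mate of `f`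
under the duality bijection `Hom(M, N) ≅ Hom(𝟙, ᘁM ⊗ N)`.  Then `f` is tensor nilpotent
iff `f̂` is tensor nilpotent. -/
theorem tensorNilpotent_iff_mate_tensorNilpotent
    {C : Type*} [Category C] [MonoidalCategory C] [Preadditive C]
    [MonoidalPreadditive C] [SymmetricCategory C]
    {M N : C} [HasLeftDual M] (f : M ⟶ N) :
    (∃ n : ℕ, 1 ≤ n ∧ tensorPowHom f n = 0) ↔
      (∃ n : ℕ, 1 ≤ n ∧ tensorPowHom (η_ (ᘁM) M ≫ ((ᘁM) ◁ f)) n = 0) := by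
  constructor
  · rintro ⟨n, hn, hf⟩
    refine ⟨n, hn, ?_⟩
    rw [tensorPowHom_comp, tensorPowHom_whiskerLeft_zero _ f n hf, Limits.comp_zero]
  · rintro ⟨n, hn, hf⟩
    refine ⟨n, hn, ?_⟩
    set fhat : 𝟙_ C ⟶ (ᘁM) ⊗ N := η_ (ᘁM) M ≫ ((ᘁM) ◁ f) with hfhat
    have hrec : f = (ρ_ M).inv ≫ (M ◁ fhat) ≫ (α_ M (ᘁM) N).inv ≫
        (ε_ (ᘁM) M ▷ N) ≫ (λ_ N).hom := by
      rw [hfhat]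
      rw [MonoidalCategory.whiskerLeft_comp_assoc]
      rw [associator_inv_naturality_right_assoc]
      rw [whisker_exchange_assoc]
      rw [ExactPairing.coevaluation_evaluation_assoc]
      simp
    rw [hrec, tensorPowHom_comp, tensorPowHom_comp]
    rw [tensorPowHom_whiskerLeft_zero _ fhat n hf]
    simp
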